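/- Let K be a finite field with q elements and let d ≥ 1 be an integer. Then the number of monic irreducible polynomials of degree d in K[x] is at least q^d/(2d); equivalently, the density of irreducible polynomials among the q^d monic polynomials of degree d in K[x] is at least 1/(2d). -/

import Mathlib

open Polynomial Finset IntermediateField

section Aux

variable {K : Type*} [Field K] [Fintype K]

/-- The splitting field of `X^(q^d) - X` has exactly `q^d` elements. -/
lemma card_splittingField_aux (d : ℕ) (hd : d ≠ 0) :
    Nat.card (Polynomial.SplittingField (X ^ (Fintype.card K) ^ d - X : K[X]))
      = Fintype.card K ^ d := by
  classical
  set q := Fintype.card K with hq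
  obtain ⟨p, hpchar⟩ := CharP.exists K
  haveI : CharP K p := hpchar
  obtain ⟨n, hp, hqn⟩ := FiniteField.card K p
  haveI : Fact p.Prime := ⟨hp⟩
  set g : K[X] := X ^ q ^ d - X with hg
  set L := g.SplittingField
  haveI : CharP L p := charP_of_injective_algebraMap' K (A := L) p
  haveI : Finite L := Module.finite_of_finite K
  haveI : Fintype L := Fintype.ofFinite L
  have hp1 : 1 < p := hp.one_lt
  have hqd : q ^ d = p ^ ((n : ℕ) * d) := by rw [hq, hqn, ← pow_mul]
  have hnd : (n : ℕ) * d ≠ 0 := by positivity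
  have aux : g ≠ 0 := by
    rw [hg, hqd]; exact FiniteField.X_pow_card_pow_sub_X_ne_zero _ hnd hp1
  have hsep : g.Separable := by
    rw [hg, hqd]
    exact galois_poly_separable p _ (dvd_pow_self p (by positivity))
  have key : Fintype.card (g.rootSet L) = g.natDegree :=
    card_rootSet_eq_natDegree hsep (SplittingField.splits g)
  have ndeg : g.natDegree = q ^ d := by
    rw [hg, hqd]; exact FiniteField.X_pow_card_pow_sub_X_natDegree_eq _ hnd hp1
  rw [ndeg] at key
  suffices huniv : g.rootSet L = Set.univ by
    have e : g.rootSet L ≃ L := huniv ▸ Equiv.Set.univ L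
    rw [Nat.card_eq_fintype_card, ← key]
    exact (Fintype.card_congr e).symm
  rw [Set.eq_univ_iff_forall]
  suffices h : ∀ (x) (_ : x ∈ (⊤ : Subalgebra K L)), x ∈ g.rootSet L by simpa using h
  rw [← SplittingField.adjoin_rootSet]
  simp_rw [Algebra.mem_adjoin_iff]
  intro x hx
  have pd : p ∣ q ^ d := by rw [hqd]; exact dvd_pow_self p (by positivity)
  refine Subring.closure_induction ?_ ?_ ?_ ?_ ?_ ?_ hx <;> simp_rw [mem_rootSet_of_ne aux]
  · rintro x (⟨r, rfl⟩ | hx)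
    · simp only [hg, map_sub, map_pow, aeval_X]
      rw [← map_pow, FiniteField.pow_card_pow, sub_self]
    · rwa [mem_rootSet_of_ne aux] at hx
  · rw [← coeff_zero_eq_aeval_zero']
    simp only [hg, coeff_X_pow, coeff_X_zero, sub_zero, _root_.map_eq_zero, ite_eq_right_iff,
      one_ne_zero, coeff_sub]
    intro hn
    exact absurd (eq_zero_of_pow_eq_zero hn.symm) (by positivity)
  · simp [hg]
  · simp only [hg, aeval_X_pow, aeval_X, map_sub, sub_eq_zero]
    intro x y _ _ hx hy
    rw [hqd] at hx hy ⊢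
    rw [add_pow_char_pow, hx, hy]
  · intro x _ hx
    simp only [hg, sub_eq_zero, aeval_X_pow, aeval_X, map_sub, sub_neg_eq_add] at *
    rw [hqd] at hx ⊢
    rw [neg_pow, hx, neg_one_pow_char_pow]
    ring
  · simp only [hg, aeval_X_pow, aeval_X, map_sub, mul_pow, sub_eq_zero]
    intro x y _ _ hx hy
    rw [hx, hy]



lemma geom_sum_aux (q : ℕ) (hq : 2 ≤ q) (m : ℕ) :
    2 * ∑ e ∈ Finset.Icc 1 m, q ^ e + 4 ≤ 4 * q ^ m := by
  induction m with
  | zero => simp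
  | succ m ih =>
    rw [Finset.sum_Icc_succ_top (by omega : 1 ≤ m + 1)]
    have h : 2 * q ^ m ≤ q ^ (m + 1) := by
      rw [pow_succ]
      have : 0 < q ^ m := Nat.pow_pos (n := m) (by omega)
      nlinarith
    linarith

lemma two_sum_le_aux (q d : ℕ) (hq : 2 ≤ q) (hd : 1 ≤ d) :
    2 * ∑ e ∈ Finset.Icc 1 (d / 2), q ^ e ≤ q ^ d := by
  set m := d / 2
  have h1 := geom_sum_aux q hq m
  have h2 : ∀ t : ℕ, 4 * t ≤ t * t + 4 := by
    intro t
    rcases Nat.le_total t 2 with h | h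
    · interval_cases t <;> omega
    · nlinarith
  have h3 : q ^ m * q ^ m ≤ q ^ d := by
    rw [← pow_add]
    exact Nat.pow_le_pow_right (by omega) (by omega)
  have := h2 (q ^ m)
  omega

end Aux

/-- Over a finite field `K` with `q` elements, for `d ≥ 1`, the number of
monic irreducible polynomials of degree `d` in `K[x]` is at least `q^d/(2d)`. -/
theorem count_irreducible_ge_half
    (K : Type*) [Field K] [Fintype K] (q : ℕ) (hq : Fintype.card K = q)
    (d : ℕ) (hd : 1 ≤ d) :
    (q : ℝ) ^ d / (2 * d)
      ≤ Nat.card {f : Polynomial K // f.Monic ∧ f.natDegree = d ∧ Irreducible f} := by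
  subst hq
  classical
  set q := Fintype.card K with hqdef
  have hq2 : 2 ≤ q := Fintype.one_lt_card
  set g : K[X] := X ^ q ^ d - X with hg
  set L := g.SplittingField with hL
  haveI : Finite L := Module.finite_of_finite K
  haveI : Fintype L := Fintype.ofFinite L
  have hcardL : Fintype.card L = q ^ d := by
    rw [← Nat.card_eq_fintype_card]
    exact card_splittingField_aux d (by omega)
  have hrank : Module.finrank K L = d := by
    have h := Module.card_eq_pow_finrank (K := K) (V := L)
    rw [hcardL] at h
    exact (Nat.pow_right_injective hq2 h.symm)
  haveI hfin : Finite {f : K[X] // f.Monic ∧ f.natDegree = d ∧ Irreducible f} := by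
    refine Finite.of_injective (fun f => fun i : Fin (d + 1) => (f : K[X]).coeff i) ?_
    intro a b h
    have hda := a.2.2.1
    have hdb := b.2.2.1
    ext1
    refine Polynomial.ext fun i => ?_
    by_cases hi : i ≤ d
    · exact congrFun h ⟨i, by omega⟩
    · rw [coeff_eq_zero_of_natDegree_lt (by omega), coeff_eq_zero_of_natDegree_lt (by omega)]
  set N := Nat.card {f : K[X] // f.Monic ∧ f.natDegree = d ∧ Irreducible f} with hN
  set A : Finset L := Finset.univ.filter (fun x => (minpoly K x).natDegree = d) with hA
  set B : Finset L := Finset.univ.filter (fun x => ¬ (minpoly K x).natDegree = d) with hB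
  have hAB : A.card + B.card = q ^ d := by
    rw [hA, hB, Finset.card_filter_add_card_filter_not, Finset.card_univ, hcardL]
  -- every element of L is integral over K
  have hint : ∀ x : L, IsIntegral K x := fun x => IsIntegral.of_finite K x
  -- bound on A
  have hAcard : A.card ≤ d * N := by
    have h1 : A.card ≤ d * (A.image (fun x => minpoly K x)).card := by
      apply Finset.card_le_mul_card_image
      intro f hf
      obtain ⟨x0, hx0A, hx0⟩ := Finset.mem_image.1 hf
      have hx0d : (minpoly K x0).natDegree = d := by
        simpa [hA] using hx0A
      have hfne : f.map (algebraMap K L) ≠ 0 := by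
        rw [← hx0]
        exact Polynomial.map_ne_zero (minpoly.ne_zero (hint x0))
      calc (A.filter (fun x => minpoly K x = f)).card
          ≤ (f.map (algebraMap K L)).roots.toFinset.card := by
            apply Finset.card_le_card
            intro x hx
            rw [Finset.mem_filter] at hx
            rw [Multiset.mem_toFinset, mem_roots hfne]
            show Polynomial.eval x (f.map (algebraMap K L)) = 0
            rw [Polynomial.eval_map, ← Polynomial.aeval_def, ← hx.2]
            exact minpoly.aeval K x
          _ ≤ (f.map (algebraMap K L)).roots.card := Multiset.toFinset_card_le _
          _ ≤ (f.map (algebraMap K L)).natDegree := Polynomial.card_roots' _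
          _ = f.natDegree := Polynomial.natDegree_map _
          _ = d := by rw [← hx0, hx0d]
    have h2 : (A.image (fun x => minpoly K x)).card ≤ N := by
      have hsub : ↑(A.image (fun x => minpoly K x))
          ⊆ {f : K[X] | f.Monic ∧ f.natDegree = d ∧ Irreducible f} := by
        intro f hf
        obtain ⟨x0, hx0A, hx0⟩ := Finset.mem_image.1 hf
        have hx0d : (minpoly K x0).natDegree = d := by simpa [hA] using hx0A
        exact ⟨hx0 ▸ minpoly.monic (hint x0), hx0 ▸ hx0d, hx0 ▸ minpoly.irreducible (hint x0)⟩
      haveI : Finite ↥{f : K[X] | f.Monic ∧ f.natDegree = d ∧ Irreducible f} := hfin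
      calc (A.image (fun x => minpoly K x)).card
          = (↑(A.image (fun x => minpoly K x)) : Set K[X]).ncard := by
            rw [Set.ncard_coe_finset]
          _ ≤ ({f : K[X] | f.Monic ∧ f.natDegree = d ∧ Irreducible f}).ncard :=
            Set.ncard_le_ncard hsub (Set.toFinite _)
          _ = N := by rw [← Nat.card_coe_set_eq]; rfl
    calc A.card ≤ d * (A.image (fun x => minpoly K x)).card := h1
      _ ≤ d * N := Nat.mul_le_mul_left d h2
  -- bound on B
  have hBcard : B.card ≤ ∑ e ∈ Finset.Icc 1 (d / 2), q ^ e := by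
    have hsub : B ⊆ (Finset.Icc 1 (d / 2)).biUnion
        (fun e => (X ^ q ^ e - X : L[X]).roots.toFinset) := by
      intro x hx
      have hxd : (minpoly K x).natDegree ≠ d := by simpa [hB] using hx
      set e := (minpoly K x).natDegree with he
      have he1 : 1 ≤ e := minpoly.natDegree_pos (hint x)
      have hfr : Module.finrank K K⟮x⟯ = e := IntermediateField.adjoin.finrank (hint x)
      have hEd : e ∣ d := by
        rw [← hrank, ← hfr]
        exact ⟨Module.finrank K⟮x⟯ L, (Module.finrank_mul_finrank K K⟮x⟯ L).symm⟩
      have hem : e ≤ d / 2 := by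
        obtain ⟨c, hc⟩ := hEd
        have hc2 : 2 ≤ c := by
          rcases c with _ | _ | c
          · omega
          · exfalso; exact hxd (by omega)
          · omega
        have h2e : 2 * e ≤ d := by
          calc 2 * e = e * 2 := by ring
            _ ≤ e * c := Nat.mul_le_mul_left e hc2
            _ = d := hc.symm
        omega
      haveI : Fintype K⟮x⟯ := Fintype.ofFinite _
      have hcard : Fintype.card K⟮x⟯ = q ^ e := by
        rw [Module.card_eq_pow_finrank (K := K) (V := K⟮x⟯), hfr]
      have hxe : x ^ q ^ e = x := by
        have h := FiniteField.pow_card (⟨x, IntermediateField.mem_adjoin_simple_self K x⟩ : K⟮x⟯)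
        rw [hcard] at h
        simpa using Subtype.ext_iff.1 h
      refine Finset.mem_biUnion.2 ⟨e, Finset.mem_Icc.2 ⟨he1, hem⟩, ?_⟩
      have hne : (X ^ q ^ e - X : L[X]) ≠ 0 :=
        FiniteField.X_pow_card_pow_sub_X_ne_zero L (by omega) (by omega)
      rw [Multiset.mem_toFinset, mem_roots hne]
      show Polynomial.eval x (X ^ q ^ e - X : L[X]) = 0
      simp [hxe]
    calc B.card ≤ _ := Finset.card_le_card hsub
      _ ≤ ∑ e ∈ Finset.Icc 1 (d / 2), ((X ^ q ^ e - X : L[X]).roots.toFinset).card :=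
        Finset.card_biUnion_le
      _ ≤ ∑ e ∈ Finset.Icc 1 (d / 2), q ^ e := by
        apply Finset.sum_le_sum
        intro e he
        calc ((X ^ q ^ e - X : L[X]).roots.toFinset).card
            ≤ (X ^ q ^ e - X : L[X]).roots.card := Multiset.toFinset_card_le _
          _ ≤ (X ^ q ^ e - X : L[X]).natDegree := Polynomial.card_roots' _
          _ = q ^ e := by
            rw [Finset.mem_Icc] at he
            exact FiniteField.X_pow_card_pow_sub_X_natDegree_eq L (by omega) (by omega)
  -- combine
  have hgeo : 2 * ∑ e ∈ Finset.Icc 1 (d / 2), q ^ e ≤ q ^ d :=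
    two_sum_le_aux q d hq2 hd
  have hkey : q ^ d ≤ 2 * (d * N) := by linarith
  rw [div_le_iff₀ (by positivity)]
  have hd' : (1 : ℝ) ≤ (d : ℝ) := by exact_mod_cast hd
  have hcast : (q : ℝ) ^ d ≤ 2 * ((d : ℝ) * N) := by exact_mod_cast hkey
  nlinarith
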